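/- arXiv:2403.04543 — 2 statements merged into one kernel-verified Lean document; each statement's English description precedes it below -/
import Mathlib

section
/- For all real numbers x, y ≥ 0 and any bounded continuous function f : ℝ → ℝ, we have ∫₀^∞ [(x−a)⁺ − (y−a)⁺ − 1_{y>a}(x−y)] f(a) da = (x−y)² σ(f;x,y), where σ(f;x,y) = ∫₀¹∫₀¹ α f(αβ(x−y)+y) dα dβ. -/
open MeasureTheory Set

private lemma inner_eq (y Δ : ℝ) (hΔ : Δ ≠ 0) (f : ℝ → ℝ) (α : ℝ) :
    ∫ β in Set.Icc (0:ℝ) 1, α * f (α * β * Δ + y)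
      = Δ⁻¹ * ∫ t in y..(y + α * Δ), f t := by
  rw [MeasureTheory.integral_Icc_eq_integral_Ioc,
    ← intervalIntegral.integral_of_le (by norm_num : (0:ℝ) ≤ 1),
    intervalIntegral.integral_const_mul]
  rcases eq_or_ne α 0 with h | h
  · simp [h]
  have hc : α * Δ ≠ 0 := mul_ne_zero h hΔ
  have h1 : (fun β => f (α * β * Δ + y)) = fun β => f ((α * Δ) * β + y) := by
    funext β; congr 1; ring
  rw [h1, intervalIntegral.integral_comp_mul_add f hc y]
  simp only [mul_zero, zero_add, mul_one, smul_eq_mul]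
  rw [show α * Δ + y = y + α * Δ by ring, ← mul_assoc, mul_inv, ← mul_assoc,
    mul_inv_cancel₀ h, one_mul]

private lemma key (y Δ : ℝ) (f : ℝ → ℝ) (hf : Continuous f) :
    ∫ a in y..(y + Δ), (y + Δ - a) * f a
      = Δ ^ 2 * ∫ β in Set.Icc (0:ℝ) 1, ∫ α in Set.Icc (0:ℝ) 1,
          α * f (α * β * Δ + y) := by
  rcases eq_or_ne Δ 0 with hΔ | hΔ
  · simp [hΔ]
  -- Fubini: swap the order of integration
  have hswap : (∫ β in Set.Icc (0:ℝ) 1, ∫ α in Set.Icc (0:ℝ) 1, α * f (α * β * Δ + y))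
      = ∫ α in Set.Icc (0:ℝ) 1, ∫ β in Set.Icc (0:ℝ) 1, α * f (α * β * Δ + y) := by
    apply MeasureTheory.integral_integral_swap
    rw [Function.uncurry_def]
    have : (volume.restrict (Set.Icc (0:ℝ) 1)).prod (volume.restrict (Set.Icc (0:ℝ) 1))
        = (volume.prod volume).restrict ((Set.Icc (0:ℝ) 1) ×ˢ (Set.Icc (0:ℝ) 1)) :=
      Measure.prod_restrict _ _
    rw [this]
    apply ContinuousOn.integrableOn_compact (isCompact_Icc.prod isCompact_Icc)
    exact (continuous_snd.mul (hf.comp (by fun_prop))).continuousOn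
  rw [hswap]
  simp_rw [inner_eq y Δ hΔ f]
  rw [MeasureTheory.integral_const_mul]
  rw [MeasureTheory.integral_Icc_eq_integral_Ioc,
    ← intervalIntegral.integral_of_le (by norm_num : (0:ℝ) ≤ 1)]
  set F : ℝ → ℝ := fun α => ∫ t in y..(y + α * Δ), f t with hFdef
  have hG : ∀ z : ℝ, HasDerivAt (fun z => ∫ t in y..z, f t) (f z) z := fun z =>
    intervalIntegral.integral_hasDerivAt_right (hf.intervalIntegrable y z)
      (hf.stronglyMeasurable.stronglyMeasurableAtFilter) hf.continuousAt
  have hF : ∀ α : ℝ, HasDerivAt F (f (y + α * Δ) * Δ) α := by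
    intro α
    have h2 : HasDerivAt (fun α : ℝ => y + α * Δ) Δ α := by
      simpa using ((hasDerivAt_id α).mul_const Δ).const_add y
    exact (hG (y + α * Δ)).comp α h2
  have hcont : Continuous fun α : ℝ => f (y + α * Δ) := hf.comp (by fun_prop)
  have parts : ∫ α in (0:ℝ)..1, F α
      = F 1 - ∫ α in (0:ℝ)..1, (f (y + α * Δ) * Δ) * α := by
    have := intervalIntegral.integral_mul_deriv_eq_deriv_mul
      (u := F) (u' := fun α => f (y + α * Δ) * Δ) (v := fun α => α) (v' := fun _ => 1)
      (a := 0) (b := 1) (fun α _ => hF α) (fun α _ => hasDerivAt_id α)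
      ((hcont.mul continuous_const).intervalIntegrable _ _)
      (continuous_const.intervalIntegrable _ _)
    simpa [hFdef] using this
  have hF1 : F 1 = Δ * ∫ α in (0:ℝ)..1, f (y + α * Δ) := by
    have h1 : (fun α : ℝ => f (y + α * Δ)) = fun α => f (Δ * α + y) := by
      funext α; congr 1; ring
    rw [h1, intervalIntegral.integral_comp_mul_add f hΔ y]
    simp only [mul_zero, zero_add, mul_one, smul_eq_mul, hFdef]
    rw [show Δ + y = y + 1 * Δ by ring, ← mul_assoc, mul_inv_cancel₀ hΔ, one_mul, one_mul]
  have hLHS : ∫ a in y..(y + Δ), (y + Δ - a) * f a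
      = Δ * ∫ α in (0:ℝ)..1, (y + Δ - (Δ * α + y)) * f (Δ * α + y) := by
    rw [intervalIntegral.integral_comp_mul_add (fun a => (y + Δ - a) * f a) hΔ y]
    rw [show Δ * 0 + y = y by ring, show Δ * 1 + y = y + Δ by ring, smul_eq_mul,
      ← mul_assoc, mul_inv_cancel₀ hΔ, one_mul]
  set I1 : ℝ := ∫ α in (0:ℝ)..1, f (y + α * Δ) with hI1
  set I2 : ℝ := ∫ α in (0:ℝ)..1, α * f (y + α * Δ) with hI2
  have hsplit : ∫ α in (0:ℝ)..1, (y + Δ - (Δ * α + y)) * f (Δ * α + y)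
      = Δ * I1 - Δ * I2 := by
    have h1 : ∀ α : ℝ, (y + Δ - (Δ * α + y)) * f (Δ * α + y)
        = Δ * f (y + α * Δ) - Δ * (α * f (y + α * Δ)) := by
      intro α; rw [show Δ * α + y = y + α * Δ by ring]; ring
    simp_rw [h1]
    have int1 : IntervalIntegrable (fun α : ℝ => Δ * f (y + α * Δ)) volume 0 1 :=
      (continuous_const.mul hcont).intervalIntegrable _ _
    have int2 : IntervalIntegrable (fun α : ℝ => Δ * (α * f (y + α * Δ))) volume 0 1 :=
      Continuous.intervalIntegrable (by fun_prop) _ _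
    rw [intervalIntegral.integral_sub int1 int2,
      intervalIntegral.integral_const_mul, intervalIntegral.integral_const_mul]
  have hparts' : ∫ α in (0:ℝ)..1, (f (y + α * Δ) * Δ) * α = Δ * I2 := by
    have h1 : ∀ α : ℝ, (f (y + α * Δ) * Δ) * α = Δ * (α * f (y + α * Δ)) := by
      intro α; ring
    simp_rw [h1]
    rw [intervalIntegral.integral_const_mul]
  rw [hLHS, hsplit, parts, hparts', hF1]
  field_simp

theorem stmt0 (x y : ℝ) (hx : 0 ≤ x) (hy : 0 ≤ y) (f : ℝ → ℝ)
    (hf : Continuous f) (hfb : ∃ C, ∀ a, |f a| ≤ C) :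
    ∫ a in Set.Ioi (0:ℝ),
        (max (x - a) 0 - max (y - a) 0 - (if a < y then x - y else 0)) * f a
      = (x - y) ^ 2 *
        ∫ β in Set.Icc (0:ℝ) 1, ∫ α in Set.Icc (0:ℝ) 1,
          α * f (α * β * (x - y) + y) := by
  have hkey := key y (x - y) f hf
  simp only [show y + (x - y) = x from by ring] at hkey
  rw [← hkey]
  have h1 : ∀ᵐ a : ℝ, a ≠ y := by
    rw [ae_iff]
    simp only [ne_eq, not_not]
    simpa using Real.volume_singleton (a := y)
  rcases le_or_gt y x with h | h
  · have hae : ∀ᵐ a ∂(volume.restrict (Set.Ioi (0:ℝ))),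
        (max (x - a) 0 - max (y - a) 0 - (if a < y then x - y else 0)) * f a
          = Set.indicator (Set.Ioc y x) (fun a => (x - a) * f a) a := by
      filter_upwards [ae_restrict_mem measurableSet_Ioi, ae_restrict_of_ae h1] with a ha hay
      rcases lt_or_ge a y with h2 | h2
      · rw [Set.indicator_of_notMem (fun hm => by
          simp only [Set.mem_Ioc] at hm; linarith [hm.1, hm.2])]
        rw [if_pos h2, max_eq_left (by linarith), max_eq_left (by linarith)]
        ring
      · have h2' : y < a := lt_of_le_of_ne h2 (Ne.symm hay)
        rw [if_neg (not_lt.mpr h2)]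
        rcases le_or_gt a x with h3 | h3
        · rw [Set.indicator_of_mem (Set.mem_Ioc.mpr ⟨h2', h3⟩), max_eq_left (by linarith),
            max_eq_right (by linarith)]
          ring
        · rw [Set.indicator_of_notMem (fun hm => by
            simp only [Set.mem_Ioc] at hm; linarith [hm.1, hm.2]),
            max_eq_right (by linarith), max_eq_right (by linarith)]
          ring
    rw [MeasureTheory.integral_congr_ae hae,
      MeasureTheory.setIntegral_indicator measurableSet_Ioc,
      show Set.Ioi (0:ℝ) ∩ Set.Ioc y x = Set.Ioc y x from
        Set.inter_eq_self_of_subset_right (fun a ha =>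
          Set.mem_Ioi.mpr (lt_of_le_of_lt hy (Set.mem_Ioc.mp ha).1)),
      ← intervalIntegral.integral_of_le h]
  · have hae : ∀ᵐ a ∂(volume.restrict (Set.Ioi (0:ℝ))),
        (max (x - a) 0 - max (y - a) 0 - (if a < y then x - y else 0)) * f a
          = Set.indicator (Set.Ioc x y) (fun a => (a - x) * f a) a := by
      filter_upwards [ae_restrict_mem measurableSet_Ioi, ae_restrict_of_ae h1] with a ha hay
      rcases le_or_gt a x with h2 | h2
      · rw [Set.indicator_of_notMem (fun hm => by
          simp only [Set.mem_Ioc] at hm; linarith [hm.1, hm.2]),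
          if_pos (by linarith), max_eq_left (by linarith), max_eq_left (by linarith)]
        ring
      · rcases lt_or_ge a y with h3 | h3
        · rw [Set.indicator_of_mem (Set.mem_Ioc.mpr ⟨h2, h3.le⟩), if_pos h3,
            max_eq_right (by linarith), max_eq_left (by linarith)]
          ring
        · have h3' : y < a := lt_of_le_of_ne h3 hay.symm
          rw [Set.indicator_of_notMem (fun hm => by
            simp only [Set.mem_Ioc] at hm; linarith [hm.1, hm.2]),
            if_neg (not_lt.mpr h3), max_eq_right (by linarith), max_eq_right (by linarith)]
          ring
    rw [MeasureTheory.integral_congr_ae hae,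
      MeasureTheory.setIntegral_indicator measurableSet_Ioc,
      show Set.Ioi (0:ℝ) ∩ Set.Ioc x y = Set.Ioc x y from
        Set.inter_eq_self_of_subset_right (fun a ha =>
          Set.mem_Ioi.mpr (lt_of_le_of_lt hx (Set.mem_Ioc.mp ha).1)),
      ← intervalIntegral.integral_of_le h.le,
      intervalIntegral.integral_symm]
    rw [← intervalIntegral.integral_neg]
    congr 1
    funext a
    ring
end

section
/- Fix n ≥ 1 and let S_n(z) = max(min(z,2n), n) for z ≥ 0, and let f_n = 1_{[n,2n]}. Then for all x, y ≥ 0, (x−y)² σ(f_n; x, y) = (1/2)(S_n(x) − S_n(y))(2x − S_n(x) − S_n(y)), where σ(f;x,y) = ∫₀¹∫₀¹ α f(αβ(x−y)+y) dα dβ. -/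
open MeasureTheory Set Asymptotics

lemma hasDerivAt_posPart_sq (u : ℝ) :
    HasDerivAt (fun v : ℝ => max v 0 ^ 2) (2 * max u 0) u := by
  rcases lt_trichotomy u 0 with h | h | h
  · rw [max_eq_right h.le, mul_zero]
    apply (hasDerivAt_const u (0:ℝ)).congr_of_eventuallyEq
    filter_upwards [eventually_lt_nhds h] with v hv
    simp [max_eq_right hv.le]
  · subst h
    rw [max_self, mul_zero]
    rw [hasDerivAt_iff_isLittleO]
    have e1 : (fun x' : ℝ => max x' 0 ^ 2 - max 0 0 ^ 2 - (x' - 0) • (0:ℝ))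
        = fun v : ℝ => max v 0 ^ 2 := by funext v; simp
    rw [e1, show (fun x' : ℝ => x' - 0) = fun v : ℝ => v from funext fun v => by ring]
    calc (fun v : ℝ => max v 0 ^ 2) =O[nhds 0] (fun v : ℝ => v * v) := by
          apply IsBigO.of_bound 1
          filter_upwards with v
          rw [one_mul, Real.norm_eq_abs, Real.norm_eq_abs]
          have h1 : v * v = v ^ 2 := by ring
          rw [h1, abs_of_nonneg (sq_nonneg _), abs_of_nonneg (sq_nonneg _)]
          rcases le_total v 0 with h | h
          · simp [max_eq_right h, sq_nonneg]
          · simp [max_eq_left h]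
      _ =o[nhds 0] (fun v : ℝ => v) := by
          have h2 : (fun v : ℝ => v * v) =o[nhds 0] fun v : ℝ => v * 1 :=
            (isBigO_refl (fun v : ℝ => v) (nhds 0)).mul_isLittleO
              ((isLittleO_one_iff ℝ).mpr Filter.tendsto_id)
          simpa using h2
  · have hp : HasDerivAt (fun v : ℝ => v ^ 2) (2 * u) u := by
      simpa [mul_comm] using hasDerivAt_pow 2 u
    rw [max_eq_left h.le]
    apply hp.congr_of_eventuallyEq
    filter_upwards [eventually_gt_nhds h] with v hv
    simp [max_eq_left hv.le]


lemma clamp_eq (n : ℝ) (hn : 0 < n) (u : ℝ) :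
    u - max (u - 2*n) 0 + max (n - u) 0 = max (min u (2*n)) n := by
  simp only [min_def, max_def]
  split_ifs <;> linarith

lemma hasDerivAt_H (n : ℝ) (hn : 0 < n) (u : ℝ) :
    HasDerivAt (fun v : ℝ => v^2/2 - (max (v - 2*n) 0 ^ 2 + max (n - v) 0 ^ 2)/2)
      (max (min u (2*n)) n) u := by
  have h1 : HasDerivAt (fun v : ℝ => max (v - 2*n) 0 ^ 2) (2 * max (u - 2*n) 0) u := by
    have := (hasDerivAt_posPart_sq (u - 2*n)).comp u ((hasDerivAt_id u).sub_const (2*n))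
    simpa [Function.comp_def] using this
  have h2 : HasDerivAt (fun v : ℝ => max (n - v) 0 ^ 2) (2 * max (n - u) 0 * (-1)) u := by
    have := (hasDerivAt_posPart_sq (n - u)).comp u ((hasDerivAt_const u n).sub (hasDerivAt_id u))
    simpa [Function.comp_def] using this
  have h3 := ((hasDerivAt_pow 2 u).div_const 2).sub ((h1.add h2).div_const 2)
  refine h3.congr_deriv ?_
  rw [← clamp_eq n hn u]
  push_cast
  ring

lemma integral_clamp (n : ℝ) (hn : 0 < n) (a b : ℝ) :
    ∫ v in a..b, max (min v (2*n)) n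
      = (b^2/2 - (max (b - 2*n) 0 ^ 2 + max (n - b) 0 ^ 2)/2)
        - (a^2/2 - (max (a - 2*n) 0 ^ 2 + max (n - a) 0 ^ 2)/2) :=
  intervalIntegral.integral_eq_sub_of_hasDerivAt (fun u _ => hasDerivAt_H n hn u)
    (((continuous_id.min continuous_const).max continuous_const).intervalIntegrable a b)

lemma intC_le (n : ℝ) (hn : 0 < n) (a b : ℝ) (hab : a ≤ b) :
    ∫ u in a..b, (Icc n (2*n)).indicator (fun _ => (1:ℝ)) u
      = max (min b (2*n)) n - max (min a (2*n)) n := by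
  rw [intervalIntegral.integral_of_le hab, MeasureTheory.setIntegral_indicator measurableSet_Icc,
    MeasureTheory.setIntegral_const]
  have hm : volume (Ioc a b ∩ Icc n (2*n)) = volume (Ioc a b ∩ Ioc n (2*n)) :=
    (measure_congr (Filter.EventuallyEq.rfl.inter
      (MeasureTheory.Ioc_ae_eq_Icc (μ := volume)).symm))
  rw [measureReal_def, hm, Set.Ioc_inter_Ioc, Real.volume_Ioc, smul_eq_mul, mul_one, ENNReal.toReal_ofReal']
  simp only [min_def, max_def]
  split_ifs <;> linarith

lemma intC (n : ℝ) (hn : 0 < n) (a b : ℝ) :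
    ∫ u in a..b, (Icc n (2*n)).indicator (fun _ => (1:ℝ)) u
      = max (min b (2*n)) n - max (min a (2*n)) n := by
  rcases le_total a b with h | h
  · exact intC_le n hn a b h
  · rw [intervalIntegral.integral_symm, intC_le n hn b a h]; ring


lemma intB (n : ℝ) (hn : 0 < n) (y t : ℝ) (ht : t ≠ 0) :
    ∫ β in Icc (0:ℝ) 1, (Icc n (2*n)).indicator (fun _ => (1:ℝ)) (t*β + y)
      = (max (min (t+y) (2*n)) n - max (min y (2*n)) n) / t := by
  rw [MeasureTheory.integral_Icc_eq_integral_Ioc, ← intervalIntegral.integral_of_le zero_le_one,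
    intervalIntegral.integral_comp_mul_add (fun u => (Icc n (2*n)).indicator (fun _ => (1:ℝ)) u) ht y,
    mul_zero, zero_add, mul_one, intC n hn, smul_eq_mul]
  ring



lemma Hrel (n : ℝ) (hn : 0 < n) (u : ℝ) :
    max (u - 2*n) 0 ^ 2 + max (n - u) 0 ^ 2 = (u - max (min u (2*n)) n)^2 := by
  simp only [min_def, max_def]
  split_ifs <;> nlinarith [sq_nonneg (u-n), sq_nonneg (u-2*n), hn]

theorem stmt1 (n : ℝ) (hn : 1 ≤ n) (x y : ℝ) (hx : 0 ≤ x) (hy : 0 ≤ y) :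
    (x - y) ^ 2 *
        ∫ β in Set.Icc (0:ℝ) 1, ∫ α in Set.Icc (0:ℝ) 1,
          α * (Set.indicator (Set.Icc n (2 * n)) (fun _ => (1:ℝ))
                (α * β * (x - y) + y))
      = (1 / 2) * (max (min x (2 * n)) n - max (min y (2 * n)) n) *
          (2 * x - max (min x (2 * n)) n - max (min y (2 * n)) n) := by
  have hn0 : (0:ℝ) < n := lt_of_lt_of_le one_pos hn
  rcases eq_or_ne x y with hxy | hxy
  · subst hxy; simp
  have hc0 : x - y ≠ 0 := sub_ne_zero.mpr hxy
  set c : ℝ := x - y with hc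
  -- integrability for Fubini
  have hmeas : Measurable fun p : ℝ × ℝ =>
      p.2 * (Icc n (2*n)).indicator (fun _ => (1:ℝ)) (p.2 * p.1 * c + y) :=
    measurable_snd.mul ((measurable_const.indicator measurableSet_Icc).comp
      (((measurable_snd.mul measurable_fst).mul_const c).add_const y))
  have hint : Integrable
      (Function.uncurry fun β α : ℝ =>
        α * (Icc n (2*n)).indicator (fun _ => (1:ℝ)) (α * β * c + y))
      ((volume.restrict (Icc (0:ℝ) 1)).prod (volume.restrict (Icc (0:ℝ) 1))) := by
    apply Integrable.mono' (integrable_const (1:ℝ)) hmeas.aestronglyMeasurable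
    rw [Measure.prod_restrict]
    rw [ae_restrict_iff' (measurableSet_Icc.prod measurableSet_Icc)]
    filter_upwards with p hp
    obtain ⟨hp1, hp2⟩ := hp
    have h2 : |(Icc n (2*n)).indicator (fun _ => (1:ℝ)) (p.2 * p.1 * c + y)| ≤ 1 := by
      rw [Set.indicator_apply]; split_ifs <;> norm_num
    have h3 : |p.2| ≤ 1 := abs_le.mpr ⟨by linarith [hp2.1], hp2.2⟩
    calc ‖p.2 * (Icc n (2*n)).indicator (fun _ => (1:ℝ)) (p.2 * p.1 * c + y)‖
        = |p.2| * |(Icc n (2*n)).indicator (fun _ => (1:ℝ)) (p.2 * p.1 * c + y)| := by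
          rw [Real.norm_eq_abs, abs_mul]
      _ ≤ 1 * 1 := by
          apply mul_le_mul h3 h2 (abs_nonneg _) zero_le_one
      _ = 1 := by norm_num
  rw [MeasureTheory.integral_integral_swap hint]
  have key : ∀ α : ℝ,
      (∫ β in Icc (0:ℝ) 1, α * (Icc n (2*n)).indicator (fun _ => (1:ℝ)) (α * β * c + y))
        = (max (min (α*c + y) (2*n)) n - max (min y (2*n)) n) / c := by
    intro α
    rcases eq_or_ne α 0 with h0 | h0
    · subst h0; simp
    · have ht : α * c ≠ 0 := mul_ne_zero h0 hc0
      rw [MeasureTheory.integral_const_mul]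
      simp_rw [show ∀ β : ℝ, α * β * c + y = (α*c) * β + y from fun β => by ring]
      rw [intB n hn0 y (α*c) ht]
      field_simp
  simp_rw [key]
  rw [MeasureTheory.integral_div]
  have hsub : ∫ α in Icc (0:ℝ) 1,
      (max (min (α*c + y) (2*n)) n - max (min y (2*n)) n)
      = (∫ α in Icc (0:ℝ) 1, max (min (α*c + y) (2*n)) n) - max (min y (2*n)) n := by
    rw [MeasureTheory.integral_sub, MeasureTheory.setIntegral_const]
    · simp [Real.volume_Icc]
    · exact (((continuous_id.mul continuous_const).add continuous_const |>.min
        continuous_const).max continuous_const).integrableOn_Icc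
    · exact integrableOn_const (by simp [Real.volume_Icc])
  rw [hsub]
  have hmain : (∫ α in Icc (0:ℝ) 1, max (min (α*c + y) (2*n)) n)
      = c⁻¹ * ((x^2/2 - ((x - max (min x (2*n)) n)^2)/2)
        - (y^2/2 - ((y - max (min y (2*n)) n)^2)/2)) := by
    rw [MeasureTheory.integral_Icc_eq_integral_Ioc, ← intervalIntegral.integral_of_le zero_le_one]
    simp_rw [show ∀ α : ℝ, α * c + y = c * α + y from fun α => by ring]
    rw [intervalIntegral.integral_comp_mul_add (fun u => max (min u (2*n)) n) hc0 y,
      mul_zero, zero_add, mul_one, show c + y = x by rw [hc]; ring,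
      integral_clamp n hn0, smul_eq_mul, Hrel n hn0 x, Hrel n hn0 y]
  rw [hmain]
  field_simp
  ring
end
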